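/- arXiv:1103.4089 — 2 statements merged into one kernel-verified Lean document; each statement's English description precedes it below -/
import Mathlib

section
/- Let R be a unital ring containing a countable set of nonzero idempotents {e_i : i ∈ ℕ} satisfying e_i e_j = e_j e_i = e_j for all j ≥ i, and such that every nonzero two-sided ideal of R contains some e_i. Then R is left primitive. -/
theorem stmt_4 {R : Type u} [Ring R] (e : ℕ → R)
    (hne : ∀ i, e i ≠ 0) (hidem : ∀ i, IsIdempotentElem (e i))
    (hcomm : ∀ i j, i ≤ j → e i * e j = e j ∧ e j * e i = e j)
    (hideal : ∀ I : TwoSidedIdeal R, I ≠ ⊥ → ∃ i, e i ∈ I) :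
    ∃ (M : Type u) (_ : AddCommGroup M) (_ : Module R M),
      IsSimpleModule R M ∧ FaithfulSMul R M := by
  set L : Ideal R := Submodule.span R (Set.range fun i => 1 - e i) with hLdef
  have key : ∀ x ∈ L, ∃ n, ∀ m, n ≤ m → x * e m = 0 := by
    intro x hx
    refine Submodule.span_induction ?_ ?_ ?_ ?_ hx
    · rintro _ ⟨i, rfl⟩
      exact ⟨i, fun m hm => by rw [sub_mul, one_mul, (hcomm i m hm).1, sub_self]⟩
    · exact ⟨0, fun m _ => zero_mul _⟩
    · rintro a b _ _ ⟨n, hn⟩ ⟨n', hn'⟩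
      refine ⟨max n n', fun m hm => ?_⟩
      rw [add_mul, hn m (le_trans (le_max_left _ _) hm),
        hn' m (le_trans (le_max_right _ _) hm), add_zero]
    · rintro r a _ ⟨n, hn⟩
      exact ⟨n, fun m hm => by rw [smul_eq_mul, mul_assoc, hn m hm, mul_zero]⟩
  have hLne : L ≠ ⊤ := by
    intro h
    obtain ⟨n, hn⟩ := key 1 (h ▸ Submodule.mem_top)
    exact hne n (by simpa using hn n le_rfl)
  obtain ⟨m, hmmax, hLm⟩ := Ideal.exists_le_maximal L hLne
  refine ⟨R ⧸ m, inferInstance, inferInstance, ?_, ?_⟩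
  · exact (isSimpleModule_iff_isCoatom).mpr (Ideal.isMaximal_def.mp hmmax)
  · constructor
    intro r₁ r₂ h
    by_contra hrr
    have hd : r₁ - r₂ ≠ 0 := sub_ne_zero.mpr hrr
    have hdm : ∀ y : R, (r₁ - r₂) * y ∈ m := by
      intro y
      have := h (Submodule.Quotient.mk y)
      rw [← Submodule.Quotient.mk_smul, ← Submodule.Quotient.mk_smul,
        Submodule.Quotient.eq] at this
      simpa [smul_eq_mul, sub_mul] using this
    set J : TwoSidedIdeal R := TwoSidedIdeal.mk'
      {a | ∀ y : R, a * y ∈ m}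
      (fun y => by simpa using m.zero_mem)
      (fun {a b} ha hb y => by simpa [add_mul] using m.add_mem (ha y) (hb y))
      (fun {a} ha y => by simpa [neg_mul] using m.neg_mem (ha y))
      (fun {a b} hb y => by
        simpa [mul_assoc] using m.smul_mem a (hb y))
      (fun {a b} ha y => by simpa [mul_assoc] using ha (b * y)) with hJdef
    have memJ : ∀ a : R, a ∈ J ↔ ∀ y : R, a * y ∈ m := fun a =>
      TwoSidedIdeal.mem_mk' _ _ _ _ _ _ a
    have hJne : J ≠ ⊥ := by
      intro hbot
      have : r₁ - r₂ ∈ (⊥ : TwoSidedIdeal R) := hbot ▸ (memJ (r₁ - r₂)).mpr hdm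
      exact hd (by simpa using this)
    obtain ⟨i, hi⟩ := hideal J hJne
    have hei : e i ∈ m := by simpa using (memJ (e i)).mp hi 1
    have h1 : (1 : R) ∈ m := by
      have := m.add_mem (hLm (Submodule.subset_span ⟨i, rfl⟩)) hei
      simpa using this
    exact hmmax.ne_top (Ideal.eq_top_iff_one m |>.mpr h1)
end

section
/- Let V be a type with a reflexive transitive relation ≥, and suppose T ⊆ V does not have CSP. Suppose to each v ∈ T is associated an element x_v of some monoid M such that for each v ∈ T the set Z(T,v) = {w ∈ T : x_v · x_w = 0} has CSP. Then the set T~ = {v ∈ T : {w ∈ T : x_v · x_w ≠ 0} does not have CSP} does not have CSP. -/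
def HasCSP {V : Type*} (ge : V → V → Prop) (S : Set V) : Prop :=
  ∃ C : Set V, C.Countable ∧ ∀ w ∈ S, ∃ v ∈ C, ge w v

theorem stmt_17 {V : Type*} (ge : V → V → Prop)
    (hrefl : ∀ v, ge v v) (htrans : ∀ a b c, ge a b → ge b c → ge a c)
    {M : Type*} [MonoidWithZero M]
    (T : Set V) (hT : ¬ HasCSP ge T) (x : V → M)
    (hZ : ∀ v ∈ T, HasCSP ge {w ∈ T | x v * x w = 0}) :
    ¬ HasCSP ge {v ∈ T | ¬ HasCSP ge {w ∈ T | x v * x w ≠ 0}} := by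
  intro h
  by_cases hex : ∃ v ∈ T, HasCSP ge {w ∈ T | x v * x w ≠ 0}
  · obtain ⟨v, hv, ⟨C1, hC1c, hC1⟩⟩ := hex
    obtain ⟨C2, hC2c, hC2⟩ := hZ v hv
    refine hT ⟨C1 ∪ C2, hC1c.union hC2c, fun w hw => ?_⟩
    by_cases hz : x v * x w = 0
    · obtain ⟨c, hc, hgc⟩ := hC2 w ⟨hw, hz⟩
      exact ⟨c, Or.inr hc, hgc⟩
    · obtain ⟨c, hc, hgc⟩ := hC1 w ⟨hw, hz⟩
      exact ⟨c, Or.inl hc, hgc⟩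
  · push_neg at hex
    obtain ⟨C, hCc, hC⟩ := h
    exact hT ⟨C, hCc, fun w hw => hC w ⟨hw, hex w hw⟩⟩
end
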